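/- arXiv:math/0702342 — 3 statements merged into one kernel-verified Lean document; each statement's English description precedes it below -/
import Mathlib

section
/- Let μ_Θ be a compactly supported probability measure on [0,∞), c > 0, and μ_Γ = μ_Θ ⊠ μ_c. Then the inverse Stieltjes transforms (inverses taken on the negative real axis) satisfy, for z in some interval (0, z₁): m_{μ_Γ}^{-1}( z / (1 − c − c·z·m_{μ_Θ}^{-1}(z)) ) = m_{μ_Θ}^{-1}(z)·(1 − c − c·z·m_{μ_Θ}^{-1}(z)). -/
open MeasureTheory

lemma aux_ae_mem (μ : Measure ℝ) {b : ℝ} (hb : μ (Set.Icc 0 b)ᶜ = 0) :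
    ∀ᵐ t ∂μ, t ∈ Set.Icc 0 b := by
  rw [ae_iff]
  exact hb

lemma aux_int_sub (μ : Measure ℝ) [IsProbabilityMeasure μ] {b m : ℝ}
    (hb : μ (Set.Icc 0 b)ᶜ = 0) (hm : m < 0) :
    Integrable (fun t => (t - m)⁻¹) μ := by
  apply Integrable.mono' (integrable_const ((-m)⁻¹))
  · exact (measurable_id.sub_const m).inv.aestronglyMeasurable
  · filter_upwards [aux_ae_mem μ hb] with t ht
    have h1 : 0 < t - m := by linarith [ht.1]
    rw [Real.norm_eq_abs, abs_of_pos (inv_pos.mpr h1)]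
    exact inv_anti₀ (by linarith) (by linarith [ht.1])

lemma aux_int_eta (μ : Measure ℝ) [IsProbabilityMeasure μ] {b g : ℝ}
    (hb : μ (Set.Icc 0 b)ᶜ = 0) (hg : 0 < g) :
    Integrable (fun t => (1 + g * t)⁻¹) μ := by
  apply Integrable.mono' (integrable_const (1 : ℝ))
  · exact ((measurable_const.add (measurable_id.const_mul g)).inv).aestronglyMeasurable
  · filter_upwards [aux_ae_mem μ hb] with t ht
    have h1 : (1:ℝ) ≤ 1 + g * t := by nlinarith [ht.1]
    rw [Real.norm_eq_abs, abs_of_pos (inv_pos.mpr (by linarith))]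
    calc (1 + g * t)⁻¹ ≤ (1:ℝ)⁻¹ := inv_anti₀ one_pos h1
      _ = 1 := inv_one

lemma aux_pos (μ : Measure ℝ) [IsProbabilityMeasure μ] {b : ℝ}
    (hb : μ (Set.Icc 0 b)ᶜ = 0) (hμ : μ (Set.Ioi 0) ≠ 0) {f : ℝ → ℝ}
    (hfi : Integrable f μ)
    (h0 : ∀ t ∈ Set.Icc (0:ℝ) b, 0 ≤ f t) (hpos : ∀ t, 0 < t → 0 < f t) :
    0 < ∫ t, f t ∂μ := by
  rw [integral_pos_iff_support_of_nonneg_ae ((aux_ae_mem μ hb).mono fun t ht => h0 t ht) hfi]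
  calc (0:ENNReal) < μ (Set.Ioi 0) := pos_iff_ne_zero.mpr hμ
    _ ≤ μ (Function.support f) :=
      measure_mono fun t ht => Function.mem_support.mpr (hpos t ht).ne'

lemma aux_mass (μ : Measure ℝ) [IsProbabilityMeasure μ] {b ε : ℝ} (hε : 0 < ε) (hε1 : ε < 1)
    (hb : μ (Set.Icc 0 b)ᶜ = 0) (g : ℝ → ℝ)
    (hg : ∀ z ∈ Set.Ioo (1-ε) 1, 0 < g z ∧ (∫ t, (1 + g z * t)⁻¹ ∂μ) = z) :
    μ (Set.Ioi 0) ≠ 0 := by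
  intro h0
  have hmem : (1 - ε/2 : ℝ) ∈ Set.Ioo (1-ε) 1 := ⟨by linarith, by linarith⟩
  obtain ⟨hgpos, hgint⟩ := hg _ hmem
  have h1 : ∀ᵐ t ∂μ, t ∉ Set.Ioi (0:ℝ) := by
    rw [ae_iff]
    simpa only [not_not, Set.setOf_mem_eq] using h0
  have hae : ∀ᵐ t ∂μ, (1 + g (1-ε/2) * t)⁻¹ = (1:ℝ) := by
    filter_upwards [aux_ae_mem μ hb, h1] with t ht ht2
    have ht0 : t = 0 := le_antisymm (by simpa using ht2) ht.1
    simp [ht0]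
  rw [integral_congr_ae hae, integral_const] at hgint
  simp only [probReal_univ, ENNReal.toReal_one, smul_eq_mul, one_mul] at hgint
  linarith

lemma aux_stieltjes_inj (μ : Measure ℝ) [IsProbabilityMeasure μ] {b : ℝ}
    (hb : μ (Set.Icc 0 b)ᶜ = 0) (hμ : μ (Set.Ioi 0) ≠ 0) {m₁ m₂ : ℝ}
    (h1 : m₁ < 0) (h2 : m₂ < 0)
    (heq : (∫ t, (t - m₁)⁻¹ ∂μ) = ∫ t, (t - m₂)⁻¹ ∂μ) : m₁ = m₂ := by
  have key : ∀ a a' : ℝ, a < 0 → a' < 0 → a < a' →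
      (∫ t, (t - a)⁻¹ ∂μ) < ∫ t, (t - a')⁻¹ ∂μ := by
    intro a a' ha ha' haa
    have hpos : 0 < ∫ t, ((t - a')⁻¹ - (t - a)⁻¹) ∂μ := by
      apply aux_pos μ hb hμ ((aux_int_sub μ hb ha').sub (aux_int_sub μ hb ha))
      · intro t ht
        simp only [Pi.sub_apply]
        have h3 : 0 < t - a' := by linarith [ht.1]
        have h4 : (t - a)⁻¹ ≤ (t - a')⁻¹ := inv_anti₀ h3 (by linarith)
        linarith
      · intro t ht
        simp only [Pi.sub_apply]
        have h3 : 0 < t - a' := by linarith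
        have h4 : (t - a)⁻¹ < (t - a')⁻¹ := inv_strictAnti₀ h3 (by linarith)
        linarith
    rw [integral_sub (aux_int_sub μ hb ha') (aux_int_sub μ hb ha)] at hpos
    linarith
  rcases lt_trichotomy m₁ m₂ with h | h | h
  · exact absurd heq (ne_of_lt (key _ _ h1 h2 h))
  · exact h
  · exact absurd heq.symm (ne_of_lt (key _ _ h2 h1 h))

lemma aux_eta_inj (μ : Measure ℝ) [IsProbabilityMeasure μ] {b : ℝ}
    (hb : μ (Set.Icc 0 b)ᶜ = 0) (hμ : μ (Set.Ioi 0) ≠ 0) {g₁ g₂ : ℝ}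
    (h1 : 0 < g₁) (h2 : 0 < g₂)
    (heq : (∫ t, (1 + g₁ * t)⁻¹ ∂μ) = ∫ t, (1 + g₂ * t)⁻¹ ∂μ) : g₁ = g₂ := by
  have key : ∀ a a' : ℝ, 0 < a → 0 < a' → a < a' →
      (∫ t, (1 + a' * t)⁻¹ ∂μ) < ∫ t, (1 + a * t)⁻¹ ∂μ := by
    intro a a' ha ha' haa
    have hpos : 0 < ∫ t, ((1 + a * t)⁻¹ - (1 + a' * t)⁻¹) ∂μ := by
      apply aux_pos μ hb hμ ((aux_int_eta μ hb ha).sub (aux_int_eta μ hb ha'))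
      · intro t ht
        simp only [Pi.sub_apply]
        have h3 : (0:ℝ) < 1 + a * t := by nlinarith [ht.1]
        have h4 : (1 + a' * t)⁻¹ ≤ (1 + a * t)⁻¹ :=
          inv_anti₀ h3 (by nlinarith [ht.1])
        linarith
      · intro t ht
        simp only [Pi.sub_apply]
        have h3 : (0:ℝ) < 1 + a * t := by nlinarith
        have h4 : (1 + a' * t)⁻¹ < (1 + a * t)⁻¹ :=
          inv_strictAnti₀ h3 (by nlinarith)
        linarith
    rw [integral_sub (aux_int_eta μ hb ha) (aux_int_eta μ hb ha')] at hpos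
    linarith
  rcases lt_trichotomy g₁ g₂ with h | h | h
  · exact absurd heq.symm (ne_of_lt (key _ _ h1 h2 h))
  · exact h
  · exact absurd heq (ne_of_lt (key _ _ h2 h1 h))

lemma aux_ptwise {m : ℝ} (hm : m ≠ 0) (t : ℝ) :
    (1 + (-m)⁻¹ * t)⁻¹ = (-m) * (t - m)⁻¹ := by
  have key : 1 + (-m)⁻¹ * t = (t - m) * (-m)⁻¹ := by
    have h2 : -m ≠ 0 := neg_ne_zero.mpr hm
    field_simp
    ring
  rw [key, mul_inv, inv_inv, mul_comm]

lemma aux_convert (μ : Measure ℝ) {m : ℝ} (hm : m < 0) :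
    (∫ t, (1 + (-m)⁻¹ * t)⁻¹ ∂μ) = (-m) * ∫ t, (t - m)⁻¹ ∂μ := by
  simp_rw [aux_ptwise hm.ne]
  exact integral_const_mul _ _

/-- if `μ_Γ = μ_Θ ⊠ μ_c` (encoded through the multiplicativity
of the S-transform `S_{μ_Γ} = S_{μ_Θ}/(1+cz)` with `S_μ(z) = -((z+1)/z)·η_μ⁻¹(z+1)`),
then the inverse Stieltjes transforms (inverted on the negative real axis)
satisfy `m_{μ_Γ}⁻¹(z/(1-c-c·z·m_{μ_Θ}⁻¹(z))) = m_{μ_Θ}⁻¹(z)·(1-c-c·z·m_{μ_Θ}⁻¹(z))`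
for `z` in some interval `(0, z₁)`. -/
theorem stmt15 (μΘ μΓ : Measure ℝ) [IsProbabilityMeasure μΘ] [IsProbabilityMeasure μΓ]
    (bΘ bΓ : ℝ) (hΘ : μΘ (Set.Icc 0 bΘ)ᶜ = 0) (hΓ : μΓ (Set.Icc 0 bΓ)ᶜ = 0)
    (c : ℝ) (hc : 0 < c)
    (gΘ gΓ : ℝ → ℝ) (ε : ℝ) (hε : 0 < ε) (hε1 : ε < 1)
    (hgΘ : ∀ z ∈ Set.Ioo (1 - ε) 1, 0 < gΘ z ∧ (∫ t, (1 + gΘ z * t)⁻¹ ∂μΘ) = z)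
    (hgΓ : ∀ z ∈ Set.Ioo (1 - ε) 1, 0 < gΓ z ∧ (∫ t, (1 + gΓ z * t)⁻¹ ∂μΓ) = z)
    (hS : ∀ z ∈ Set.Ioo (-ε) (0 : ℝ),
      -((z + 1) / z) * gΓ (z + 1) = (-((z + 1) / z) * gΘ (z + 1)) * (1 / (1 + c * z)))
    (mΘinv mΓinv : ℝ → ℝ) (z₀ : ℝ) (hz₀ : 0 < z₀)
    (hmΘ : ∀ z ∈ Set.Ioo 0 z₀, mΘinv z < 0 ∧ (∫ t, (t - mΘinv z)⁻¹ ∂μΘ) = z)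
    (hmΓ : ∀ z ∈ Set.Ioo 0 z₀, mΓinv z < 0 ∧ (∫ t, (t - mΓinv z)⁻¹ ∂μΓ) = z) :
    ∃ z₁ > 0, ∀ z ∈ Set.Ioo 0 z₁,
      mΓinv (z / (1 - c - c * z * mΘinv z))
        = mΘinv z * (1 - c - c * z * mΘinv z) := by
  have hbΘ0 : 0 ≤ bΘ := by
    by_contra h
    push_neg at h
    rw [Set.Icc_eq_empty (not_le.mpr h), Set.compl_empty] at hΘ
    simp [measure_univ] at hΘ
  have hmassΘ := aux_mass μΘ hε hε1 hΘ gΘ hgΘ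
  have hmassΓ := aux_mass μΓ hε hε1 hΓ gΓ hgΓ
  refine ⟨min (z₀/2) (min (ε / (bΘ + 1)) (1 / (2*c*(bΘ+1)))), ?_, fun z hz => ?_⟩
  · have h1 : (0:ℝ) < ε / (bΘ + 1) := div_pos hε (by linarith)
    have h2 : (0:ℝ) < 1 / (2*c*(bΘ+1)) := by positivity
    simp only [lt_min_iff]
    exact ⟨by linarith, h1, h2⟩
  obtain ⟨hz0, hzz₁⟩ := hz
  have hz_a : z < z₀/2 := lt_of_lt_of_le hzz₁ (min_le_left _ _)
  have hz_b : z < ε / (bΘ+1) :=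
    lt_of_lt_of_le hzz₁ (le_trans (min_le_right _ _) (min_le_left _ _))
  have hz_c : z < 1 / (2*c*(bΘ+1)) :=
    lt_of_lt_of_le hzz₁ (le_trans (min_le_right _ _) (min_le_right _ _))
  have hzz₀ : z ∈ Set.Ioo 0 z₀ := ⟨hz0, by linarith⟩
  obtain ⟨hm_neg, hm_int⟩ := hmΘ z hzz₀
  set m := mΘinv z with hm_def
  have hbm : 0 < bΘ - m := by linarith
  -- lower bound: z * (bΘ - m) ≥ 1
  have hB2 : 1 ≤ z * (bΘ - m) := by
    have h1 : (bΘ - m)⁻¹ ≤ z := by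
      rw [← hm_int]
      calc (bΘ - m)⁻¹ = ∫ _t, (bΘ - m)⁻¹ ∂μΘ := by
            simp [integral_const, measure_univ]
        _ ≤ _ := by
            refine integral_mono_ae (integrable_const _) (aux_int_sub μΘ hΘ hm_neg) ?_
            filter_upwards [aux_ae_mem μΘ hΘ] with t ht
            exact inv_anti₀ (by linarith [ht.1]) (by linarith [ht.2])
    calc (1:ℝ) = (bΘ - m)⁻¹ * (bΘ - m) := (inv_mul_cancel₀ hbm.ne').symm
      _ ≤ z * (bΘ - m) := mul_le_mul_of_nonneg_right h1 hbm.le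
  -- upper bound: (-m) * z < 1
  have hB1 : (-m) * z < 1 := by
    have hpos : 0 < ∫ t, ((-m)⁻¹ - (t - m)⁻¹) ∂μΘ := by
      apply aux_pos μΘ hΘ hmassΘ ((integrable_const _).sub (aux_int_sub μΘ hΘ hm_neg))
      · intro t ht
        simp only [Pi.sub_apply]
        have h4 : (t - m)⁻¹ ≤ (-m)⁻¹ :=
          inv_anti₀ (by linarith) (by linarith [ht.1])
        linarith
      · intro t ht
        simp only [Pi.sub_apply]
        have h4 : (t - m)⁻¹ < (-m)⁻¹ :=
          inv_strictAnti₀ (by linarith) (by linarith)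
        linarith
    rw [integral_sub (integrable_const _) (aux_int_sub μΘ hΘ hm_neg), hm_int,
      integral_const] at hpos
    simp only [probReal_univ, ENNReal.toReal_one, smul_eq_mul, one_mul] at hpos
    have h5 : z < (-m)⁻¹ := by linarith
    have h6 : (0:ℝ) < -m := by linarith
    calc (-m) * z < (-m) * (-m)⁻¹ := mul_lt_mul_of_pos_left h5 h6
      _ = 1 := mul_inv_cancel₀ h6.ne'
  set w := (-m) * z with hw_def
  have hw_lb : 1 - bΘ * z ≤ w := by
    have : z * (bΘ - m) = bΘ * z + w := by rw [hw_def]; ring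
    linarith
  have hbz : bΘ * z < ε := by
    have h1 : (0:ℝ) < bΘ + 1 := by linarith
    have h2 := (lt_div_iff₀ h1).mp hz_b
    nlinarith
  have hw_mem : w ∈ Set.Ioo (1-ε) 1 := ⟨by linarith, hB1⟩
  have hcbz : c * bΘ * z < 1/2 := by
    have h1 : (0:ℝ) < 2*c*(bΘ+1) := by positivity
    have h2 := (lt_div_iff₀ h1).mp hz_c
    nlinarith [mul_pos hc hz0]
  set D := 1 - c - c * z * m with hD_def
  have hD_eq : 1 + c * (w - 1) = D := by rw [hw_def, hD_def]; ring
  have hD_half : 1/2 < D := by nlinarith [hw_lb, hcbz, hc]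
  have hD_pos : 0 < D := by linarith
  -- identify gΘ w
  have hθint : (∫ t, (1 + (-m)⁻¹ * t)⁻¹ ∂μΘ) = w := by
    rw [aux_convert μΘ hm_neg, hm_int]
  obtain ⟨hgw_pos, hgw_int⟩ := hgΘ w hw_mem
  have hgθw : gΘ w = (-m)⁻¹ :=
    aux_eta_inj μΘ hΘ hmassΘ hgw_pos (inv_pos.mpr (by linarith))
      (hgw_int.trans hθint.symm)
  -- use the S-transform relation at w - 1
  have hw1 : w - 1 ∈ Set.Ioo (-ε) (0:ℝ) :=
    ⟨by linarith [hw_mem.1], by linarith [hw_mem.2]⟩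
  have hSw := hS (w - 1) hw1
  rw [sub_add_cancel] at hSw
  have hw0 : w ≠ 0 := by have := hw_mem.1; intro h; rw [h] at this; linarith
  have hw1' : w - 1 ≠ 0 := by have := hw_mem.2; intro h; linarith [sub_eq_zero.mp h]
  have hk : -(w/(w-1)) ≠ 0 := neg_ne_zero.mpr (div_ne_zero hw0 hw1')
  have hgγw : gΓ w = gΘ w * (1/(1 + c*(w-1))) := by
    rw [mul_assoc] at hSw
    exact mul_left_cancel₀ hk hSw
  set M := m * D with hM_def
  have hM_neg : M < 0 := mul_neg_of_neg_of_pos hm_neg hD_pos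
  have hgγw' : gΓ w = (-M)⁻¹ := by
    rw [hgγw, hgθw, hD_eq, one_div, hM_def,
      show -(m*D) = (-m)*D by ring, mul_inv]
  -- compute the Γ-side Stieltjes integral at M
  obtain ⟨hgγ_pos, hgγ_int⟩ := hgΓ w hw_mem
  rw [hgγw', aux_convert μΓ hM_neg] at hgγ_int
  have hMne : (-M) ≠ 0 := by linarith
  have hΓint : (∫ t, (t - M)⁻¹ ∂μΓ) = z / D := by
    have hkey : (-M) * (z/D) = w := by
      rw [hM_def, hw_def]
      field_simp
    exact mul_left_cancel₀ hMne (hgγ_int.trans hkey.symm)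
  have hz' : z / D ∈ Set.Ioo 0 z₀ := by
    refine ⟨div_pos hz0 hD_pos, ?_⟩
    have h1 : z / D < 2 * z := by
      rw [div_lt_iff₀ hD_pos]
      nlinarith
    linarith
  obtain ⟨hmγ_neg, hmγ_int⟩ := hmΓ (z/D) hz'
  exact aux_stieltjes_inj μΓ hΓ hmassΓ hmγ_neg hM_neg (hmγ_int.trans hΓint.symm)
end

section
/- Let μ_W and μ_Γ be compactly supported probability measures on [0,∞), σ > 0, c > 0. The functional equation m_{μ_W}(z) = ∫ dμ_Γ(t) / ( t/(1+σ²c·m_{μ_W}(z)) − (1+σ²c·m_{μ_W}(z))z + σ²(1−c) ) for z in ℂ⁺ is equivalent to the inverse-Stieltjes-transform identity m_{μ_W}^{-1}( z/(1 − σ²cz) ) = (1 − σ²cz)²·m_{μ_Γ}^{-1}(z) + σ²(1−c)(1 − σ²cz) for z in some interval (0, z₁), where inverses are of the Stieltjes transform restricted to the negative real axis. -/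
open MeasureTheory Set Metric Complex Topology Filter

noncomputable def sm (μ : Measure ℝ) (z : ℂ) : ℂ := ∫ t, ((t : ℂ) - z)⁻¹ ∂μ
noncomputable def smr (μ : Measure ℝ) (x : ℝ) : ℝ := ∫ t, (t - x)⁻¹ ∂μ
noncomputable def Af (μW : Measure ℝ) (k : ℝ) (z : ℂ) : ℂ := 1 + (k : ℂ) * sm μW z
noncomputable def Zf (μW : Measure ℝ) (k e : ℝ) (z : ℂ) : ℂ :=
  (Af μW k z) ^ 2 * z - (e : ℂ) * Af μW k z
noncomputable def Hf (μW μΓ : Measure ℝ) (k e : ℝ) (z : ℂ) : ℂ :=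
  sm μW z - Af μW k z * sm μΓ (Zf μW k e z)

noncomputable def Complex.abs : AbsoluteValue ℂ ℝ := IsAbsoluteValue.toAbsoluteValue (norm : ℂ → ℝ)
@[simp] lemma Complex.norm_eq_abs (z : ℂ) : ‖z‖ = Complex.abs z := rfl
@[simp] lemma Complex.abs_ofReal (x : ℝ) : Complex.abs (x : ℂ) = |x| := by
  rw [← Complex.norm_eq_abs, Complex.norm_real, Real.norm_eq_abs]
@[simp] lemma Complex.abs_I : Complex.abs Complex.I = 1 := by
  rw [← Complex.norm_eq_abs, Complex.norm_I]
lemma Complex.sq_abs (z : ℂ) : Complex.abs z ^ 2 = Complex.normSq z := by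
  rw [← Complex.norm_eq_abs, Complex.sq_norm]
lemma Complex.abs_im_le_abs (z : ℂ) : |z.im| ≤ Complex.abs z := Complex.abs_im_le_norm z
lemma Complex.abs_re_le_abs (z : ℂ) : |z.re| ≤ Complex.abs z := Complex.abs_re_le_norm z

set_option linter.unusedSectionVars false

section basic
variable {μ : Measure ℝ} [IsProbabilityMeasure μ] {b : ℝ}

lemma ae_mem_Icc (hsupp : μ (Set.Icc 0 b)ᶜ = 0) : ∀ᵐ t ∂μ, t ∈ Set.Icc 0 b := by
  rw [ae_iff]
  have he : {t : ℝ | ¬ t ∈ Set.Icc 0 b} = (Set.Icc 0 b)ᶜ := rfl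
  rw [he]; exact hsupp


lemma b_nonneg (hsupp : μ (Set.Icc 0 b)ᶜ = 0) : 0 ≤ b := by
  by_contra h
  have h1 : Set.Icc (0:ℝ) b = ∅ := Set.Icc_eq_empty (by linarith)
  have h2 : μ Set.univ = 0 := by
    have hu : (Set.univ : Set ℝ) = Set.Icc 0 b ∪ (Set.Icc 0 b)ᶜ :=
      (Set.union_compl_self _).symm
    have hIcc : μ (Set.Icc 0 b) = 0 := by rw [h1]; exact measure_empty
    rw [hu]
    refine le_antisymm ((measure_union_le _ _).trans ?_) zero_le
    rw [hIcc, hsupp]; simp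
  simp [measure_univ] at h2


lemma meas_inv (z : ℂ) : Measurable fun t : ℝ => ((t : ℂ) - z)⁻¹ :=
  (Complex.measurable_ofReal.sub measurable_const).inv


lemma abs_sub_lower {t : ℝ} {z z₀ : ℂ} {δ : ℝ}
    (h : δ ≤ Complex.abs ((t : ℂ) - z₀)) (hz : Complex.abs (z - z₀) < δ/2) :
    δ/2 ≤ Complex.abs ((t : ℂ) - z) := by
  have h5 := Complex.abs.add_le ((t:ℂ) - z) (z - z₀)
  have h4 : (t:ℂ) - z + (z - z₀) = (t:ℂ) - z₀ := by ring
  rw [h4] at h5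
  linarith


lemma integrable_inv (hsupp : μ (Set.Icc 0 b)ᶜ = 0) {z : ℂ} {δ : ℝ} (hδ : 0 < δ)
    (h : ∀ t ∈ Set.Icc 0 b, δ ≤ Complex.abs ((t : ℂ) - z)) :
    Integrable (fun t : ℝ => ((t : ℂ) - z)⁻¹) μ := by
  refine Integrable.mono' (integrable_const δ⁻¹) (meas_inv z).aestronglyMeasurable ?_
  filter_upwards [ae_mem_Icc hsupp] with t ht
  rw [norm_inv]
  exact inv_anti₀ hδ (h t ht)


lemma norm_sm_le (hsupp : μ (Set.Icc 0 b)ᶜ = 0) {z : ℂ} {δ : ℝ} (hδ : 0 < δ)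
    (h : ∀ t ∈ Set.Icc 0 b, δ ≤ Complex.abs ((t : ℂ) - z)) :
    Complex.abs (sm μ z) ≤ δ⁻¹ := by
  have := norm_integral_le_of_norm_le_const (μ := μ) (C := δ⁻¹)
    (f := fun t : ℝ => ((t : ℂ) - z)⁻¹) ?_
  · simpa [sm] using this
  · filter_upwards [ae_mem_Icc hsupp] with t ht
    rw [norm_inv]
    exact inv_anti₀ hδ (h t ht)


lemma differentiableAt_sm (hsupp : μ (Set.Icc 0 b)ᶜ = 0) {z₀ : ℂ} {δ : ℝ} (hδ : 0 < δ)
    (h : ∀ t ∈ Set.Icc 0 b, δ ≤ Complex.abs ((t : ℂ) - z₀)) :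
    DifferentiableAt ℂ (sm μ) z₀ := by
  have key := hasDerivAt_integral_of_dominated_loc_of_deriv_le (μ := μ) (𝕜 := ℂ)
    (F := fun (z : ℂ) (t : ℝ) => ((t : ℂ) - z)⁻¹)
    (F' := fun (z : ℂ) (t : ℝ) => (((t : ℂ) - z)^2)⁻¹)
    (x₀ := z₀) (s := ball z₀ (δ/2)) (bound := fun _ => ((δ/2)^2)⁻¹) (ball_mem_nhds _ (by positivity))
    (Filter.Eventually.of_forall fun z => (meas_inv z).aestronglyMeasurable)
    (integrable_inv hsupp hδ h)
    (((Complex.measurable_ofReal.sub measurable_const).pow_const 2).inv.aestronglyMeasurable)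
    ?_ (integrable_const _) ?_
  · exact key.2.differentiableAt
  · filter_upwards [ae_mem_Icc hsupp] with t ht z hz
    have h3 : Complex.abs (z - z₀) < δ/2 := by simpa [Complex.dist_eq] using hz
    have h1 := abs_sub_lower (h t ht) h3
    rw [norm_inv, norm_pow]
    apply inv_anti₀ (by positivity)
    have h2 : ‖(t:ℂ) - z‖ = Complex.abs ((t:ℂ) - z) := rfl
    rw [h2]
    nlinarith
  · filter_upwards [ae_mem_Icc hsupp] with t ht z hz
    have h3 : Complex.abs (z - z₀) < δ/2 := by simpa [Complex.dist_eq] using hz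
    have h1 := abs_sub_lower (h t ht) h3
    have hne : (t : ℂ) - z ≠ 0 := by
      intro h0; rw [h0] at h1; simp at h1; linarith
    have hd : HasDerivAt (fun z : ℂ => (t : ℂ) - z) (-1) z := by
      simpa using (hasDerivAt_id z).const_sub (t : ℂ)
    have := hd.inv hne
    exact this.congr_deriv (by rw [neg_neg, one_div])

lemma abs_lower_im {t : ℝ} {z : ℂ} (hz : 0 < z.im) : z.im ≤ Complex.abs ((t:ℂ) - z) := by
  have h1 : |((t:ℂ) - z).im| ≤ Complex.abs ((t:ℂ) - z) := Complex.abs_im_le_abs _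
  have h2 : ((t:ℂ) - z).im = -z.im := by simp
  rw [h2] at h1
  rw [abs_neg, abs_of_pos hz] at h1
  exact h1


lemma sm_im_pos (hsupp : μ (Set.Icc 0 b)ᶜ = 0) (hb : 0 ≤ b) {z : ℂ} (hz : 0 < z.im) :
    0 < (sm μ z).im := by
  have hInt : Integrable (fun t : ℝ => ((t : ℂ) - z)⁻¹) μ :=
    integrable_inv hsupp hz (fun t _ => abs_lower_im hz)
  have him : (sm μ z).im = ∫ t, (((t : ℂ) - z)⁻¹).im ∂μ := (integral_im hInt).symm
  rw [him]
  have hC : 0 < (b + Complex.abs z)^2 := by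
    have : 0 < Complex.abs z := lt_of_lt_of_le hz ((le_abs_self _).trans (Complex.abs_im_le_abs z))
    positivity
  have key : ∀ t ∈ Set.Icc (0:ℝ) b, z.im / (b + Complex.abs z)^2 ≤ (((t : ℂ) - z)⁻¹).im := by
    intro t ht
    rw [Complex.inv_im]
    have h2 : ((t:ℂ) - z).im = -z.im := by simp
    rw [h2]
    have h3 : Complex.normSq ((t:ℂ) - z) ≤ (b + Complex.abs z)^2 := by
      rw [← Complex.sq_abs]
      have h4 : Complex.abs ((t:ℂ) - z) ≤ b + Complex.abs z := by
        refine (Complex.abs.sub_le_add _ _).trans ?_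
        simp only [Complex.abs_ofReal]
        have := ht.1; have := ht.2
        rw [_root_.abs_of_nonneg ht.1]
        linarith
      have h5 : (0:ℝ) ≤ Complex.abs ((t:ℂ) - z) := Complex.abs.nonneg _
      nlinarith
    have h6 : 0 < Complex.normSq ((t:ℂ) - z) := by
      have := abs_lower_im (t := t) hz
      rw [← Complex.sq_abs]
      nlinarith
    rw [neg_neg, div_le_div_iff₀ hC h6] at *
    nlinarith
  have hmono := integral_mono_ae (g := fun t : ℝ => (((t : ℂ) - z)⁻¹).im)
    (integrable_const (z.im / (b + Complex.abs z)^2)) hInt.im ?_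
  · have : ∫ _ : ℝ, z.im / (b + Complex.abs z)^2 ∂μ = z.im / (b + Complex.abs z)^2 := by
      simp
    rw [this] at hmono
    exact lt_of_lt_of_le (by positivity) hmono
  · filter_upwards [ae_mem_Icc hsupp] with t ht
    exact key t ht


lemma zsm_im_nonneg (hsupp : μ (Set.Icc 0 b)ᶜ = 0) {z : ℂ} (hz : 0 < z.im) :
    0 ≤ (z * sm μ z).im := by
  have hInt : Integrable (fun t : ℝ => ((t : ℂ) - z)⁻¹) μ :=
    integrable_inv hsupp hz (fun t _ => abs_lower_im hz)
  have h1 : z * sm μ z = ∫ t, z * ((t : ℂ) - z)⁻¹ ∂μ := (integral_const_mul z _).symm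
  have him : (∫ t, z * ((t : ℂ) - z)⁻¹ ∂μ).im = ∫ t, (z * ((t : ℂ) - z)⁻¹).im ∂μ :=
    (integral_im (hInt.const_mul z)).symm
  rw [h1, him]
  refine integral_nonneg_of_ae ?_
  filter_upwards [ae_mem_Icc hsupp] with t ht
  have hne : (t : ℂ) - z ≠ 0 := by
    intro h0
    have := abs_lower_im (t := t) hz
    rw [h0] at this; simp at this; linarith
  have h2 : z * ((t : ℂ) - z)⁻¹ = (t : ℂ) * ((t : ℂ) - z)⁻¹ - 1 := by
    field_simp
    ring
  rw [h2]
  have h3 : ((t : ℂ) * ((t : ℂ) - z)⁻¹ - 1).im = t * (((t : ℂ) - z)⁻¹).im := by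
    simp [Complex.mul_im]
  rw [h3, Complex.inv_im]
  have h4 : ((t:ℂ) - z).im = -z.im := by simp
  rw [h4, neg_neg]
  have h6 : 0 < Complex.normSq ((t:ℂ) - z) := by
    have := abs_lower_im (t := t) hz
    rw [← Complex.sq_abs]; nlinarith
  have := ht.1
  positivity

-- real-axis lemmas

lemma sm_ofReal (μ : Measure ℝ) (x : ℝ) : sm μ (x : ℂ) = ((smr μ x : ℝ) : ℂ) := by
  unfold sm smr
  have h : ∀ t : ℝ, ((t:ℂ) - (x:ℂ))⁻¹ = (((t - x)⁻¹ : ℝ) : ℂ) := by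
    intro t; push_cast; ring
  simp_rw [h]
  exact integral_ofReal


lemma integrable_invr (hsupp : μ (Set.Icc 0 b)ᶜ = 0) {x : ℝ} (hx : x < 0) :
    Integrable (fun t : ℝ => (t - x)⁻¹) μ := by
  refine Integrable.mono' (integrable_const (-x)⁻¹)
    ((measurable_id.sub measurable_const).inv).aestronglyMeasurable ?_
  filter_upwards [ae_mem_Icc hsupp] with t ht
  have h1 : 0 < t - x := by have := ht.1; linarith
  rw [Real.norm_eq_abs, abs_of_pos (by positivity)]
  apply inv_anti₀ (by linarith)
  linarith [ht.1]


lemma smr_le (hsupp : μ (Set.Icc 0 b)ᶜ = 0) {x : ℝ} (hx : x < 0) :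
    smr μ x ≤ (-x)⁻¹ := by
  have h := integral_mono_ae (μ := μ) (integrable_invr hsupp hx) (integrable_const (-x)⁻¹) ?_
  · simpa [smr] using h
  · filter_upwards [ae_mem_Icc hsupp] with t ht
    apply inv_anti₀ (by linarith)
    linarith [ht.1]


lemma smr_lb (hsupp : μ (Set.Icc 0 b)ᶜ = 0) (hb : 0 ≤ b) {x : ℝ} (hx : x < 0) :
    (b - x)⁻¹ ≤ smr μ x := by
  have h := integral_mono_ae (μ := μ) (integrable_const (b-x)⁻¹) (integrable_invr hsupp hx) ?_
  · simpa [smr] using h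
  · filter_upwards [ae_mem_Icc hsupp] with t ht
    apply inv_anti₀ (by have := ht.1; linarith)
    linarith [ht.2]


lemma smr_pos (hsupp : μ (Set.Icc 0 b)ᶜ = 0) {x : ℝ} (hx : x < 0) (hb : 0 ≤ b) :
    0 < smr μ x :=
  lt_of_lt_of_le (inv_pos.2 (by linarith)) (smr_lb hsupp hb hx)


lemma smr_lt (hsupp : μ (Set.Icc 0 b)ᶜ = 0) {x y : ℝ} (hb : 0 ≤ b)
    (hxy : x < y) (hy : y < 0) : smr μ x < smr μ y := by
  have hx : x < 0 := by linarith
  have hIx := integrable_invr hsupp hx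
  have hIy := integrable_invr hsupp hy
  have hsub : smr μ y - smr μ x = ∫ t, ((t - y)⁻¹ - (t - x)⁻¹) ∂μ := by
    rw [integral_sub hIy hIx]; rfl
  have hc : 0 < (y - x) / ((b - x) * (b - y)) := by
    apply div_pos (by linarith)
    apply mul_pos <;> linarith
  have h := integral_mono_ae (μ := μ) (g := fun t : ℝ => (t - y)⁻¹ - (t - x)⁻¹)
    (integrable_const ((y - x) / ((b - x) * (b - y)))) (hIy.sub hIx) ?_
  · have h2 : ∫ _ : ℝ, (y - x) / ((b - x) * (b - y)) ∂μ = (y - x) / ((b - x) * (b - y)) := by simp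
    rw [h2] at h
    have h' : (y - x) / ((b - x) * (b - y)) ≤ smr μ y - smr μ x := by
      rw [hsub]; exact h
    linarith
  · filter_upwards [ae_mem_Icc hsupp] with t ht
    have h1 : 0 < t - x := by have := ht.1; linarith
    have h2 : 0 < t - y := by have := ht.1; linarith
    have h3 : (t - y)⁻¹ - (t - x)⁻¹ = (y - x) / ((t - x) * (t - y)) := by
      rw [inv_sub_inv (by linarith : t - y ≠ 0) (by linarith : t - x ≠ 0)]
      ring_nf
    rw [h3]
    apply div_le_div_of_nonneg_left (by linarith) (mul_pos h1 h2)
    apply mul_le_mul <;> [linarith [ht.2]; linarith [ht.2]; linarith; linarith]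


lemma smr_inj (hsupp : μ (Set.Icc 0 b)ᶜ = 0) {x y : ℝ} (hb : 0 ≤ b)
    (hx : x < 0) (hy : y < 0) (h : smr μ x = smr μ y) : x = y := by
  rcases lt_trichotomy x y with h1 | h1 | h1
  · exact absurd h (ne_of_lt (smr_lt hsupp hb h1 hy))
  · exact h1
  · exact absurd h.symm (ne_of_lt (smr_lt hsupp hb h1 hx))


end basic

section main
variable {μW μΓ : Measure ℝ} [IsProbabilityMeasure μW] [IsProbabilityMeasure μΓ]
  {bW bΓ : ℝ} {k e : ℝ}

/-- rewrite of the (4.1) RHS integral -/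
lemma eq41_rw (z : ℂ) (hA : Af μW k z ≠ 0) :
    (∫ t, ((t : ℂ) / (Af μW k z) - Af μW k z * z + (e : ℂ))⁻¹ ∂μΓ)
      = Af μW k z * sm μΓ (Zf μW k e z) := by
  have hpt : ∀ t : ℝ, ((t : ℂ) / (Af μW k z) - Af μW k z * z + (e : ℂ))⁻¹
      = Af μW k z * ((t : ℂ) - Zf μW k e z)⁻¹ := by
    intro t
    have h1 : (t : ℂ) / (Af μW k z) - Af μW k z * z + (e : ℂ)
        = (Af μW k z)⁻¹ * ((t : ℂ) - Zf μW k e z) := by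
      unfold Zf
      field_simp
      ring
    rw [h1, mul_inv, inv_inv]
  unfold sm
  simp_rw [hpt]
  exact integral_const_mul _ _

/-- differentiability and nonvanishing on the upper half plane -/
lemma upper_facts (hWsupp : μW (Set.Icc 0 bW)ᶜ = 0) (hΓsupp : μΓ (Set.Icc 0 bΓ)ᶜ = 0)
    (hk : 0 < k) {z : ℂ} (hz : 0 < z.im) :
    Af μW k z ≠ 0 ∧ DifferentiableAt ℂ (Hf μW μΓ k e) z := by
  have hbW : 0 ≤ bW := b_nonneg hWsupp
  have imA : (Af μW k z).im = k * (sm μW z).im := by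
    simp [Af, Complex.add_im, Complex.im_ofReal_mul]
  have imApos : 0 < (Af μW k z).im := by
    rw [imA]; exact mul_pos hk (sm_im_pos hWsupp hbW hz)
  have hA : Af μW k z ≠ 0 := by
    intro h0; rw [h0] at imApos; simp at imApos
  have hAz : z.im ≤ (Af μW k z * z).im := by
    have h1 : Af μW k z * z = z + (k : ℂ) * (z * sm μW z) := by
      unfold Af; ring
    rw [h1, Complex.add_im, Complex.im_ofReal_mul]
    have := zsm_im_nonneg hWsupp (z := z) hz
    nlinarith
  -- distance from ζ to [0, bΓ]
  have hζ : ∀ t ∈ Set.Icc (0:ℝ) bΓ,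
      z.im * Complex.abs (Af μW k z) ≤ Complex.abs ((t : ℂ) - Zf μW k e z) := by
    intro t ht
    have habsA : 0 < Complex.abs (Af μW k z) := by
      simpa [Complex.abs.pos_iff] using hA
    have hX : (Af μW k z)⁻¹ * ((t : ℂ) - Zf μW k e z)
        = (Af μW k z)⁻¹ * (t : ℂ) - Af μW k z * z + (e : ℂ) := by
      unfold Zf
      field_simp
      ring
    have himX : ((Af μW k z)⁻¹ * ((t : ℂ) - Zf μW k e z)).im ≤ -z.im := by
      rw [hX]
      have h2 : ((Af μW k z)⁻¹ * (t : ℂ)).im = t * (Af μW k z)⁻¹.im := by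
        rw [mul_comm, Complex.im_ofReal_mul]
      have h2' : (Af μW k z)⁻¹.im ≤ 0 := by
        rw [Complex.inv_im]
        apply div_nonpos_of_nonpos_of_nonneg (by linarith) (Complex.normSq_nonneg _)
      have h3 : ((Af μW k z)⁻¹ * (t:ℂ) - Af μW k z * z + (e:ℂ)).im
          = t * (Af μW k z)⁻¹.im - (Af μW k z * z).im := by
        simp [Complex.add_im, Complex.sub_im, h2]
      rw [h3]
      nlinarith [mul_nonpos_of_nonneg_of_nonpos ht.1 h2']
    have habsX : z.im ≤ Complex.abs ((Af μW k z)⁻¹ * ((t : ℂ) - Zf μW k e z)) := by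
      have h3 := Complex.abs_im_le_abs ((Af μW k z)⁻¹ * ((t : ℂ) - Zf μW k e z))
      have := abs_le.mp (le_refl |((Af μW k z)⁻¹ * ((t : ℂ) - Zf μW k e z)).im|)
      calc z.im ≤ -(((Af μW k z)⁻¹ * ((t : ℂ) - Zf μW k e z)).im) := by linarith
        _ ≤ |((Af μW k z)⁻¹ * ((t : ℂ) - Zf μW k e z)).im| := neg_le_abs _
        _ ≤ _ := h3
    rw [map_mul, map_inv₀] at habsX
    rw [← mul_le_mul_iff_of_pos_left (inv_pos.2 habsA)]
    calc (Complex.abs (Af μW k z))⁻¹ * (z.im * Complex.abs (Af μW k z))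
        = z.im := by field_simp
      _ ≤ _ := habsX
  have hdW : DifferentiableAt ℂ (sm μW) z :=
    differentiableAt_sm hWsupp hz (fun t _ => abs_lower_im hz)
  have hdA : DifferentiableAt ℂ (Af μW k) z := by
    unfold Af
    exact (differentiableAt_const _).add ((differentiableAt_const _).mul hdW)
  have hdZ : DifferentiableAt ℂ (Zf μW k e) z := by
    unfold Zf
    exact ((hdA.pow 2).mul differentiableAt_id).sub ((differentiableAt_const _).mul hdA)
  have hdΓ : DifferentiableAt ℂ (sm μΓ) (Zf μW k e z) := by
    refine differentiableAt_sm hΓsupp ?_ hζ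
    have habsA : 0 < Complex.abs (Af μW k z) := by
      simpa [Complex.abs.pos_iff] using hA
    positivity
  refine ⟨hA, ?_⟩
  unfold Hf
  exact hdW.sub (hdA.mul (hdΓ.comp z hdZ))
/-- facts on a ball around a very negative real point -/
lemma ball_facts (hWsupp : μW (Set.Icc 0 bW)ᶜ = 0) (hΓsupp : μΓ (Set.Icc 0 bΓ)ᶜ = 0)
    (hk : 0 < k) {x : ℝ} (hx : x ≤ -(7*k + 2*|e| + 4)) {z : ℂ}
    (hz : z ∈ ball ((x:ℝ) : ℂ) 1) :
    Af μW k z ≠ 0 ∧ DifferentiableAt ℂ (Hf μW μΓ k e) z ∧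
    Complex.abs (Zf μW k e z - z) ≤ 5*k + 2*|e| ∧
    Complex.abs (sm μW z) ≤ (-x-1)⁻¹ := by
  have he0 : 0 ≤ |e| := abs_nonneg e
  have hm : 2*k + (5*k + 2*|e| + 1) + 2 ≤ -x - 1 := by linarith
  have hm2 : (2:ℝ) ≤ -x - 1 := by linarith
  have hm0 : (0:ℝ) < -x - 1 := by linarith
  have hdz : Complex.abs (z - (x:ℂ)) < 1 := by
    rw [← Complex.norm_eq_abs, ← Complex.dist_eq]; exact mem_ball.mp hz
  have hre : z.re - x < 1 := by
    have h1 := Complex.abs_re_le_abs (z - (x:ℂ))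
    have h2 : (z - (x:ℂ)).re = z.re - x := by simp
    rw [h2] at h1
    calc z.re - x ≤ |z.re - x| := le_abs_self _
      _ ≤ Complex.abs (z - (x:ℂ)) := h1
      _ < 1 := hdz
  have habsz : Complex.abs z ≤ -x + 1 := by
    have h1 := Complex.abs.add_le ((x:ℂ)) (z - (x:ℂ))
    have h2 : (x:ℂ) + (z - (x:ℂ)) = z := by ring
    rw [h2] at h1
    have h3 : Complex.abs ((x:ℝ):ℂ) = -x := by
      rw [Complex.abs_ofReal, abs_of_neg]; linarith
    rw [h3] at h1; linarith
  have hdistW : ∀ t ∈ Set.Icc (0:ℝ) bW, (-x-1) ≤ Complex.abs ((t:ℂ) - z) := by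
    intro t ht
    have h1 : ((t:ℂ) - z).re = t - z.re := by simp
    have h2 := Complex.abs_re_le_abs ((t:ℂ) - z)
    rw [h1] at h2
    have h3 : t - z.re ≤ |t - z.re| := le_abs_self _
    have := ht.1
    linarith
  have habs_sm : Complex.abs (sm μW z) ≤ (-x-1)⁻¹ := norm_sm_le hWsupp hm0 hdistW
  have hA1 : Complex.abs (Af μW k z - 1) ≤ k * (-x-1)⁻¹ := by
    have h1 : Af μW k z - 1 = (k:ℂ) * sm μW z := by unfold Af; ring
    rw [h1, map_mul, Complex.abs_ofReal, abs_of_pos hk]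
    exact mul_le_mul_of_nonneg_left habs_sm hk.le
  have hkm : k * (-x-1)⁻¹ ≤ 1/2 := by
    have h1 : (-x-1)⁻¹ ≤ (2*k)⁻¹ := by
      apply inv_anti₀ (by positivity); linarith
    have h2 : k * (-x-1)⁻¹ ≤ k * (2*k)⁻¹ := mul_le_mul_of_nonneg_left h1 hk.le
    have h3 : k * (2*k)⁻¹ = 1/2 := by field_simp
    linarith
  have habsA_lb : 1/2 ≤ Complex.abs (Af μW k z) := by
    have h1 := Complex.abs.sub_le_add (Af μW k z) (Af μW k z - 1)
    have h2 : Af μW k z - (Af μW k z - 1) = 1 := by ring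
    rw [h2] at h1
    simp only [map_one] at h1
    linarith
  have habsA_ub : Complex.abs (Af μW k z) ≤ 3/2 := by
    have h1 := Complex.abs.add_le (Af μW k z - 1) 1
    have h2 : Af μW k z - 1 + 1 = Af μW k z := by ring
    rw [h2] at h1
    simp only [map_one] at h1
    linarith
  have hA : Af μW k z ≠ 0 := by
    intro h0; rw [h0] at habsA_lb; simp at habsA_lb; linarith
  have hZd : Complex.abs (Zf μW k e z - z) ≤ 5*k + 2*|e| := by
    have h1 : Zf μW k e z - z = (Af μW k z - 1) * (Af μW k z + 1) * z - (e:ℂ) * Af μW k z := by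
      unfold Zf; ring
    have h2 := Complex.abs.sub_le_add ((Af μW k z - 1) * (Af μW k z + 1) * z) ((e:ℂ) * Af μW k z)
    rw [← h1] at h2
    have h3 : Complex.abs ((Af μW k z - 1) * (Af μW k z + 1) * z)
        = Complex.abs (Af μW k z - 1) * Complex.abs (Af μW k z + 1) * Complex.abs z := by
      rw [map_mul, map_mul]
    have h4 : Complex.abs (Af μW k z + 1) ≤ 5/2 := by
      have := Complex.abs.add_le (Af μW k z) 1
      simp only [map_one] at this
      linarith
    have h5 : Complex.abs ((e:ℂ) * Af μW k z) ≤ |e| * (3/2) := by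
      rw [map_mul, Complex.abs_ofReal]
      exact mul_le_mul_of_nonneg_left habsA_ub (abs_nonneg e)
    have h6 : Complex.abs (Af μW k z - 1) * Complex.abs (Af μW k z + 1) * Complex.abs z
        ≤ (k * (-x-1)⁻¹) * (5/2) * (-x+1) := by
      apply mul_le_mul
      · apply mul_le_mul hA1 h4 (Complex.abs.nonneg _) (by positivity)
      · exact habsz
      · exact Complex.abs.nonneg _
      · positivity
    have h7 : (k * (-x-1)⁻¹) * (5/2) * (-x+1) ≤ 5*k := by
      have hinv : (-x-1) * (-x-1)⁻¹ = 1 := mul_inv_cancel₀ (ne_of_gt hm0)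
      have h8 : (-x-1)⁻¹ * (-x+1) ≤ 2 := by
        have h9 : -x+1 ≤ 2*(-x-1) := by linarith
        have h10 : (0:ℝ) ≤ (-x-1)⁻¹ := by positivity
        calc (-x-1)⁻¹ * (-x+1) ≤ (-x-1)⁻¹ * (2*(-x-1)) :=
          mul_le_mul_of_nonneg_left h9 h10
        _ = 2 := by field_simp
      nlinarith [hk.le]
    rw [h3] at h2
    linarith
  have hdistΓ : ∀ t ∈ Set.Icc (0:ℝ) bΓ, (1:ℝ) ≤ Complex.abs ((t:ℂ) - Zf μW k e z) := by
    intro t ht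
    have h1 : (Zf μW k e z - z).re ≤ 5*k + 2*|e| := by
      have := Complex.abs_re_le_abs (Zf μW k e z - z)
      have h2 := le_abs_self (Zf μW k e z - z).re
      linarith
    have h2 : (Zf μW k e z).re ≤ z.re + (5*k + 2*|e|) := by
      have h3 : (Zf μW k e z - z).re = (Zf μW k e z).re - z.re := by simp
      linarith [h1, h3 ▸ h1]
    have h4 : ((t:ℂ) - Zf μW k e z).re = t - (Zf μW k e z).re := by simp
    have h5 := Complex.abs_re_le_abs ((t:ℂ) - Zf μW k e z)
    rw [h4] at h5
    have h6 : t - (Zf μW k e z).re ≤ |t - (Zf μW k e z).re| := le_abs_self _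
    have := ht.1
    linarith
  have hdW : DifferentiableAt ℂ (sm μW) z := differentiableAt_sm hWsupp hm0 hdistW
  have hdA : DifferentiableAt ℂ (Af μW k) z := by
    unfold Af
    exact (differentiableAt_const _).add ((differentiableAt_const _).mul hdW)
  have hdZ : DifferentiableAt ℂ (Zf μW k e) z := by
    unfold Zf
    exact ((hdA.pow 2).mul differentiableAt_id).sub ((differentiableAt_const _).mul hdA)
  have hdΓ : DifferentiableAt ℂ (sm μΓ) (Zf μW k e z) :=
    differentiableAt_sm hΓsupp one_pos hdistΓ
  exact ⟨hA, hdW.sub (hdA.mul (hdΓ.comp z hdZ)), hZd, habs_sm⟩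

/-- real-axis evaluation of `Hf` -/
lemma real_facts (hWsupp : μW (Set.Icc 0 bW)ᶜ = 0) (hΓsupp : μΓ (Set.Icc 0 bΓ)ᶜ = 0)
    (hk : 0 < k) {x : ℝ} (hx : x ≤ -(7*k + 2*|e| + 4)) :
    (1 + k * smr μW x)^2 * x - e * (1 + k * smr μW x) < 0 ∧
    (Hf μW μΓ k e ((x:ℝ):ℂ) = 0 ↔
      smr μW x = (1 + k * smr μW x) * smr μΓ ((1 + k * smr μW x)^2 * x - e * (1 + k * smr μW x))) := by
  have hball : ((x:ℝ):ℂ) ∈ ball ((x:ℝ):ℂ) 1 := mem_ball_self one_pos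
  obtain ⟨hA, hdiff, hZd, habs⟩ := ball_facts hWsupp hΓsupp hk hx hball
  set w := smr μW x with hw
  have hAx : Af μW k ((x:ℝ):ℂ) = ((1 + k*w : ℝ) : ℂ) := by
    unfold Af; rw [sm_ofReal]; push_cast; ring
  have hy : Zf μW k e ((x:ℝ):ℂ) = (((1+k*w)^2*x - e*(1+k*w) : ℝ) : ℂ) := by
    unfold Zf; rw [hAx]; push_cast; ring
  have hy_lt : (1+k*w)^2*x - e*(1+k*w) < 0 := by
    have h1 : Complex.abs (Zf μW k e ((x:ℝ):ℂ) - ((x:ℝ):ℂ)) ≤ 5*k+2*|e| := hZd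
    rw [hy] at h1
    have h2 : ((((1+k*w)^2*x - e*(1+k*w) : ℝ)):ℂ) - ((x:ℝ):ℂ)
        = (((1+k*w)^2*x - e*(1+k*w) - x : ℝ):ℂ) := by push_cast; ring
    rw [h2, Complex.abs_ofReal] at h1
    have h3 := le_abs_self ((1+k*w)^2*x - e*(1+k*w) - x)
    have he0 : 0 ≤ |e| := abs_nonneg e
    linarith
  refine ⟨hy_lt, ?_⟩
  have hH : Hf μW μΓ k e ((x:ℝ):ℂ)
      = ((w - (1+k*w) * smr μΓ ((1+k*w)^2*x - e*(1+k*w)) : ℝ) : ℂ) := by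
    unfold Hf
    rw [hAx, hy, sm_ofReal, sm_ofReal]
    push_cast; ring
  rw [hH, Complex.ofReal_eq_zero, sub_eq_zero]

/-- identity-theorem transfer between the upper half plane and negative reals -/
lemma transfer (hWsupp : μW (Set.Icc 0 bW)ᶜ = 0) (hΓsupp : μΓ (Set.Icc 0 bΓ)ᶜ = 0)
    (hk : 0 < k) {x : ℝ} (hx : x ≤ -(7*k + 2*|e| + 4)) :
    ((∀ z : ℂ, 0 < z.im → Hf μW μΓ k e z = 0) → Hf μW μΓ k e ((x:ℝ):ℂ) = 0) ∧
    ((∀ x' : ℝ, x' ≤ x → Hf μW μΓ k e ((x':ℝ):ℂ) = 0) →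
      ∀ z : ℂ, 0 < z.im → Hf μW μΓ k e z = 0) := by
  set U : Set ℂ := {z : ℂ | 0 < z.im} ∪ ball ((x:ℝ):ℂ) 1 with hU
  have hop1 : IsOpen {z : ℂ | 0 < z.im} := isOpen_lt continuous_const Complex.continuous_im
  have hopen : IsOpen U := hop1.union isOpen_ball
  have hpmem : ((x:ℝ):ℂ) + (1/2 : ℝ) * Complex.I ∈ {z : ℂ | 0 < z.im} := by
    simp [Complex.add_im]
  have hpmem2 : ((x:ℝ):ℂ) + (1/2 : ℝ) * Complex.I ∈ ball ((x:ℝ):ℂ) 1 := by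
    rw [mem_ball, Complex.dist_eq, Complex.norm_eq_abs]
    have h1 : ((x:ℝ):ℂ) + (1/2:ℝ)*Complex.I - ((x:ℝ):ℂ) = ((1/2:ℝ):ℂ)*Complex.I := by ring
    rw [h1, map_mul, Complex.abs_ofReal, Complex.abs_I]
    rw [abs_of_pos] <;> norm_num
  have hconn : IsPreconnected U :=
    IsPreconnected.union (((x:ℝ):ℂ) + (1/2:ℝ) * Complex.I) hpmem hpmem2
      (convex_halfSpace_im_gt 0).isPreconnected (convex_ball _ _).isPreconnected
  have hdiff : DifferentiableOn ℂ (Hf μW μΓ k e) U := by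
    intro z hzU
    rcases hzU with hz | hz
    · exact ((upper_facts hWsupp hΓsupp hk hz).2).differentiableWithinAt
    · exact ((ball_facts hWsupp hΓsupp hk hx hz).2.1).differentiableWithinAt
  have han : AnalyticOnNhd ℂ (Hf μW μΓ k e) U := hdiff.analyticOnNhd hopen
  constructor
  · intro h41
    have hz₀ : ((x:ℝ):ℂ) + (1/2:ℝ) * Complex.I ∈ U := Or.inl hpmem
    have hev : ∀ᶠ z in 𝓝 (((x:ℝ):ℂ) + (1/2:ℝ) * Complex.I), Hf μW μΓ k e z = 0 :=
      Filter.eventually_of_mem (hop1.mem_nhds hpmem) (fun z hz => h41 z hz)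
    have hfreq : ∃ᶠ u in 𝓝[≠] (((x:ℝ):ℂ) + (1/2:ℝ) * Complex.I), Hf μW μΓ k e u = 0 :=
      (hev.filter_mono nhdsWithin_le_nhds).frequently
    have heq := han.eqOn_zero_of_preconnected_of_frequently_eq_zero hconn hz₀ hfreq
    have hmem : ((x:ℝ):ℂ) ∈ U := Or.inr (mem_ball_self one_pos)
    simpa using heq hmem
  · intro hreal z hz
    have hz₀ : ((x:ℝ):ℂ) ∈ U := Or.inr (mem_ball_self one_pos)
    have hfreq : ∃ᶠ u in 𝓝[≠] (((x:ℝ):ℂ)), Hf μW μΓ k e u = 0 := by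
      rw [Filter.frequently_iff]
      intro V hV
      rw [Metric.mem_nhdsWithin_iff] at hV
      obtain ⟨ε, hε, hsub⟩ := hV
      have hd0 : 0 < min (ε/2) 1 := lt_min (by linarith) one_pos
      have hd1 : min (ε/2) 1 ≤ ε/2 := min_le_left _ _
      refine ⟨((x - min (ε/2) 1 : ℝ):ℂ), hsub ⟨?_, ?_⟩, hreal _ (by linarith)⟩
      · rw [mem_ball, Complex.dist_eq, Complex.norm_eq_abs]
        have h1 : ((x - min (ε/2) 1:ℝ):ℂ) - ((x:ℝ):ℂ) = ((-(min (ε/2) 1) : ℝ):ℂ) := by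
          push_cast; ring
        rw [h1, Complex.abs_ofReal, abs_neg, abs_of_pos hd0]
        linarith
      · simp only [Set.mem_compl_iff, Set.mem_singleton_iff]
        intro h0
        rw [Complex.ofReal_inj] at h0
        linarith
    have heq := han.eqOn_zero_of_preconnected_of_frequently_eq_zero hconn hz₀ hfreq
    simpa using heq (Or.inl hz)

end main

set_option maxHeartbeats 1000000 in
/-- equivalence of the Dozier–Silverstein functional equation
(4.1) on `ℂ⁺` with the inverse-Stieltjes-transform identity (4.2) on an
interval `(0, z₁)`, the inverses being taken on the negative real axis. -/
theorem stmt16 (μW μΓ : Measure ℝ) [IsProbabilityMeasure μW] [IsProbabilityMeasure μΓ]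
    (bW bΓ : ℝ) (hWsupp : μW (Set.Icc 0 bW)ᶜ = 0) (hΓsupp : μΓ (Set.Icc 0 bΓ)ᶜ = 0)
    (σ c : ℝ) (hσ : 0 < σ) (hc : 0 < c)
    (mWinv mΓinv : ℝ → ℝ) (z₀ : ℝ) (hz₀ : 0 < z₀)
    (hmW : ∀ z ∈ Set.Ioo 0 z₀, mWinv z < 0 ∧ (∫ t, (t - mWinv z)⁻¹ ∂μW) = z)
    (hmΓ : ∀ z ∈ Set.Ioo 0 z₀, mΓinv z < 0 ∧ (∫ t, (t - mΓinv z)⁻¹ ∂μΓ) = z) :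
    (∀ z : ℂ, 0 < z.im →
        (∫ t, ((t : ℂ) - z)⁻¹ ∂μW) =
          ∫ t, ((t : ℂ) / (1 + (σ : ℂ) ^ 2 * (c : ℂ) * ∫ s, ((s : ℂ) - z)⁻¹ ∂μW)
              - (1 + (σ : ℂ) ^ 2 * (c : ℂ) * ∫ s, ((s : ℂ) - z)⁻¹ ∂μW) * z
              + (σ : ℂ) ^ 2 * (1 - (c : ℂ)))⁻¹ ∂μΓ)
    ↔ (∃ z₁ > 0, ∀ z ∈ Set.Ioo 0 z₁,
        mWinv (z / (1 - σ ^ 2 * c * z))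
          = (1 - σ ^ 2 * c * z) ^ 2 * mΓinv z + σ ^ 2 * (1 - c) * (1 - σ ^ 2 * c * z)) := by
  set k : ℝ := σ ^ 2 * c with hk_def
  set e : ℝ := σ ^ 2 * (1 - c) with he_def
  have hk : 0 < k := by rw [hk_def]; positivity
  have hbW : 0 ≤ bW := b_nonneg hWsupp
  have hbΓ : 0 ≤ bΓ := b_nonneg hΓsupp
  obtain ⟨R, hR_def⟩ : ∃ R : ℝ, R = 7*k + 2*|e| + 4 := ⟨_, rfl⟩
  have hR_pos : 0 < R := by have := abs_nonneg e; rw [hR_def]; linarith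
  have he_eq : (σ:ℂ)^2 * (1 - (c:ℂ)) = ((e : ℝ):ℂ) := by rw [he_def]; push_cast; ring
  have hA_eq : ∀ z : ℂ, 1 + (σ:ℂ)^2*(c:ℂ) * (∫ s, ((s:ℂ) - z)⁻¹ ∂μW) = Af μW k z := by
    intro z; unfold Af sm; rw [hk_def]; push_cast; ring
  have h41iff : ∀ z : ℂ, 0 < z.im →
      (((∫ t, ((t:ℂ) - z)⁻¹ ∂μW) =
        ∫ t, ((t : ℂ) / (1 + (σ : ℂ) ^ 2 * (c : ℂ) * ∫ s, ((s : ℂ) - z)⁻¹ ∂μW)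
              - (1 + (σ : ℂ) ^ 2 * (c : ℂ) * ∫ s, ((s : ℂ) - z)⁻¹ ∂μW) * z
              + (σ : ℂ) ^ 2 * (1 - (c : ℂ)))⁻¹ ∂μΓ) ↔ Hf μW μΓ k e z = 0) := by
    intro z hz
    have hA := (upper_facts (bW := bW) (bΓ := bΓ) hWsupp hΓsupp hk (e := e) hz).1
    rw [hA_eq z, he_eq, eq41_rw (μΓ := μΓ) z hA]
    unfold Hf
    rw [sub_eq_zero]
    exact Iff.rfl
  constructor
  · -- forward direction
    intro h41
    have hH41 : ∀ z : ℂ, 0 < z.im → Hf μW μΓ k e z = 0 :=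
      fun z hz => (h41iff z hz).mp (h41 z hz)
    have hz₁a : (0:ℝ) < (2*k)⁻¹ := by positivity
    have hRb : (0:ℝ) < R + bW + 1 := by linarith
    have hz₁b : (0:ℝ) < (2*(R + bW + 1))⁻¹ := by positivity
    refine ⟨min (z₀/2) (min ((2*k)⁻¹) ((2*(R + bW + 1))⁻¹)),
      lt_min (by linarith) (lt_min hz₁a hz₁b), ?_⟩
    rintro z ⟨hz0, hzlt⟩
    have hzlt1 : z < z₀/2 := lt_of_lt_of_le hzlt (min_le_left _ _)
    have hzlt2 : z < (2*k)⁻¹ := lt_of_lt_of_le hzlt ((min_le_right _ _).trans (min_le_left _ _))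
    have hzlt3 : z < (2*(R + bW + 1))⁻¹ :=
      lt_of_lt_of_le hzlt ((min_le_right _ _).trans (min_le_right _ _))
    have hkz : k * z < 1/2 := by
      have h := mul_lt_mul_of_pos_left hzlt2 hk
      have h2 : k * (2*k)⁻¹ = 1/2 := by field_simp
      linarith
    obtain ⟨u, hu_def⟩ : ∃ u : ℝ, u = 1 - k * z := ⟨_, rfl⟩
    have hu_half : 1/2 < u := by rw [hu_def]; linarith
    have hu_pos : 0 < u := by linarith
    have hu0 : u ≠ 0 := ne_of_gt hu_pos
    obtain ⟨w, hw_def⟩ : ∃ w : ℝ, w = z / u := ⟨_, rfl⟩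
    have hw_pos : 0 < w := hw_def ▸ div_pos hz0 hu_pos
    have hw_le : w ≤ 2 * z := by
      rw [hw_def, div_le_iff₀ hu_pos]
      nlinarith
    have hw_lt_z0 : w < z₀ := by linarith
    obtain ⟨hx_neg, hx_eq⟩ := hmW w ⟨hw_pos, hw_lt_z0⟩
    obtain ⟨x, hx_def⟩ : ∃ x : ℝ, x = mWinv w := ⟨_, rfl⟩
    have hx_neg' : x < 0 := hx_def ▸ hx_neg
    have hx_smr : smr μW x = w := by rw [hx_def]; exact hx_eq
    have hx_le : x ≤ -R := by
      have h1 : (bW - x)⁻¹ ≤ w := hx_smr ▸ smr_lb hWsupp hbW hx_neg'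
      have h2 : w⁻¹ ≤ bW - x := by
        have := inv_anti₀ (inv_pos.2 (by linarith : (0:ℝ) < bW - x)) h1
        rwa [inv_inv] at this
      have h3 : w ≤ (R + bW + 1)⁻¹ := by
        have h6 : 2 * (2*(R + bW + 1))⁻¹ = (R + bW + 1)⁻¹ := by
          rw [mul_inv]
          field_simp
        linarith [hzlt3.le]
      have h7 : R + bW + 1 ≤ w⁻¹ := by
        have h8 := inv_anti₀ hw_pos h3
        rwa [inv_inv] at h8
      linarith
    have hHx : Hf μW μΓ k e ((x:ℝ):ℂ) = 0 :=
      (transfer hWsupp hΓsupp hk (by rw [← hR_def]; exact hx_le)).1 hH41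
    obtain ⟨hy_lt, hHiff⟩ := real_facts (μW := μW) (μΓ := μΓ) hWsupp hΓsupp hk
      (x := x) (by rw [← hR_def]; exact hx_le)
    rw [hx_smr] at hy_lt hHiff
    have hreal := hHiff.mp hHx
    have ha_eq : 1 + k * w = u⁻¹ := by
      rw [hw_def, hu_def]
      have h0 : (1:ℝ) - k * z ≠ 0 := by linarith
      field_simp
      ring
    have h1 : u * (1 + k * w) = 1 := by rw [ha_eq]; field_simp
    have h2 : u * w = z := by rw [hw_def]; field_simp
    have hsmΓ : smr μΓ ((1 + k*w)^2*x - e*(1 + k*w)) = z := by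
      calc smr μΓ ((1 + k*w)^2*x - e*(1 + k*w))
          = (u*(1 + k*w)) * smr μΓ ((1 + k*w)^2*x - e*(1 + k*w)) := by rw [h1]; ring
        _ = u * ((1 + k*w) * smr μΓ ((1 + k*w)^2*x - e*(1 + k*w))) := by ring
        _ = u * w := by rw [← hreal]
        _ = z := h2
    obtain ⟨hΓ_neg, hΓ_eq⟩ := hmΓ z ⟨hz0, by linarith⟩
    have hΓ_smr : smr μΓ (mΓinv z) = z := hΓ_eq
    have hy_inj : (1 + k*w)^2*x - e*(1 + k*w) = mΓinv z :=
      smr_inj hΓsupp hbΓ hy_lt hΓ_neg (by rw [hsmΓ, hΓ_smr])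
    have key : u^2 * ((1 + k*w)^2*x - e*(1 + k*w)) + e*u = x := by
      calc u^2 * ((1 + k*w)^2*x - e*(1 + k*w)) + e*u
          = (u*(1 + k*w))^2 * x - e*(u*(1 + k*w))*u + e*u := by ring
        _ = x := by rw [h1]; ring
    have hgoal : mWinv (z / u) = u ^ 2 * mΓinv z + e * u := by
      rw [← hw_def, ← hx_def, ← hy_inj, key]
    rw [← hu_def]
    exact hgoal
  · -- backward direction
    rintro ⟨z₁, hz₁, h42⟩ z hzim
    rw [h41iff z hzim]
    have hz₀i : 0 < z₀⁻¹ := inv_pos.2 hz₀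
    have hz₁i : 0 < z₁⁻¹ := inv_pos.2 hz₁
    obtain ⟨R₂, hR₂_def⟩ : ∃ R₂ : ℝ, R₂ = R + z₀⁻¹ + z₁⁻¹ + 1 := ⟨_, rfl⟩
    have hR₂_pos : 0 < R₂ := by rw [hR₂_def]; linarith
    have hrealzeros : ∀ x' : ℝ, x' ≤ -R₂ → Hf μW μΓ k e ((x':ℝ):ℂ) = 0 := by
      intro x' hx'
      have hx'R : x' ≤ -R := by rw [hR₂_def] at hx'; linarith
      have hx'neg : x' < 0 := by linarith
      obtain ⟨w, hw_def⟩ : ∃ w : ℝ, w = smr μW x' := ⟨_, rfl⟩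
      have hw_pos : 0 < w := hw_def ▸ smr_pos hWsupp hx'neg hbW
      have hw_le : w ≤ (-x')⁻¹ := hw_def ▸ smr_le hWsupp hx'neg
      have hw_lt : w < min z₀ z₁ := by
        have h3 : (-x')⁻¹ ≤ R₂⁻¹ := inv_anti₀ hR₂_pos (by linarith)
        have h4 : R₂⁻¹ < min z₀ z₁ := by
          rw [lt_min_iff]
          constructor
          · have h5 : z₀⁻¹ < R₂ := by rw [hR₂_def]; linarith
            have h6 := inv_strictAnti₀ hz₀i h5
            rwa [inv_inv] at h6
          · have h5 : z₁⁻¹ < R₂ := by rw [hR₂_def]; linarith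
            have h6 := inv_strictAnti₀ hz₁i h5
            rwa [inv_inv] at h6
        linarith
      have hw_z0 : w < z₀ := lt_of_lt_of_le hw_lt (min_le_left _ _)
      have hw_z1 : w < z₁ := lt_of_lt_of_le hw_lt (min_le_right _ _)
      have hkw : 0 < 1 + k * w := by nlinarith
      have hkw0 : 1 + k * w ≠ 0 := ne_of_gt hkw
      obtain ⟨zz, hzz_def⟩ : ∃ zz : ℝ, zz = w / (1 + k * w) := ⟨_, rfl⟩
      have hzz_pos : 0 < zz := hzz_def ▸ div_pos hw_pos hkw
      have hzz_lt_w : zz < w := by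
        rw [hzz_def, div_lt_iff₀ hkw]
        nlinarith [mul_pos (mul_pos hk hw_pos) hw_pos]
      have h42z := h42 zz ⟨hzz_pos, by linarith⟩
      have hu_eq : 1 - k * zz = (1 + k * w)⁻¹ := by
        rw [hzz_def]
        field_simp
        ring
      have harg : zz / (1 - k * zz) = w := by
        rw [hu_eq, hzz_def]
        field_simp
      rw [harg, hu_eq] at h42z
      obtain ⟨hmw_neg, hmw_eq⟩ := hmW w ⟨hw_pos, hw_z0⟩
      have hmw_smr : smr μW (mWinv w) = w := hmw_eq
      have hx_eq : mWinv w = x' := smr_inj hWsupp hbW hmw_neg hx'neg (by rw [hmw_smr, hw_def])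
      rw [hx_eq] at h42z
      obtain ⟨hmΓ_neg, hmΓ_eq⟩ := hmΓ zz ⟨hzz_pos, by linarith⟩
      have hmΓ_smr : smr μΓ (mΓinv zz) = zz := hmΓ_eq
      obtain ⟨hy_lt, hHiff⟩ := real_facts (μW := μW) (μΓ := μΓ) hWsupp hΓsupp hk
        (x := x') (by rw [← hR_def]; exact hx'R)
      rw [← hw_def] at hy_lt hHiff
      have h1 : ((1 + k * w)⁻¹) * (1 + k * w) = 1 := by field_simp
      have hy_eq : (1 + k*w)^2*x' - e*(1 + k*w) = mΓinv zz := by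
        rw [h42z]
        calc (1 + k*w)^2 * (((1 + k * w)⁻¹)^2 * mΓinv zz + e*((1 + k * w)⁻¹)) - e*(1 + k*w)
            = ((1 + k * w)⁻¹ * (1 + k*w))^2 * mΓinv zz
              + e*((1 + k * w)⁻¹ * (1 + k*w))*(1 + k*w) - e*(1+k*w) := by ring
          _ = mΓinv zz := by rw [h1]; ring
      rw [hHiff, hy_eq, hmΓ_smr, hzz_def]
      field_simp
    exact (transfer hWsupp hΓsupp hk (x := -R₂)
      (by rw [← hR_def]; rw [hR₂_def]; linarith)).2 hrealzeros z hzim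
end

section
/- Let μ_Γ, μ_Θ, μ_W be compactly supported probability measures on [0,∞) with μ_Γ = μ_Θ ⊠ μ_c and suppose μ_W satisfies m_{μ_W}^{-1}(z/(1−σ²cz)) = (1−σ²cz)²·m_{μ_Γ}^{-1}(z) + σ²(1−c)(1−σ²cz) on an interval (0, z₁). Then μ_W = (μ_Θ ⊞ δ_{σ²}) ⊠ μ_c; equivalently μ_W ⊠ μ_c = (μ_Γ ⊠ μ_c) ⊞ δ_{σ²}. -/
open MeasureTheory


lemma stmt18_aux (μ : Measure ℝ) [IsProbabilityMeasure μ] (b : ℝ)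
    (hsupp : μ (Set.Icc 0 b)ᶜ = 0) (m z : ℝ) (hm : m < 0) (hz : 0 < z)
    (hint : (∫ t, (t - m)⁻¹ ∂μ) = z) (hb : 0 ≤ b) :
    1 ≤ z * (b - m) := by
  have hbm : 0 < b - m := by linarith
  have hi : Integrable (fun t => (t - m)⁻¹) μ := by
    by_contra h
    rw [integral_undef h] at hint
    linarith
  have hae : ∀ᵐ t ∂μ, (b - m)⁻¹ ≤ (t - m)⁻¹ := by
    rw [ae_iff]
    refine measure_mono_null (fun t ht => ?_) hsupp
    simp only [Set.mem_compl_iff, Set.mem_Icc, not_and_or, not_le]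
    by_contra h
    push_neg at h
    obtain ⟨h1, h2⟩ := h
    exact ht (inv_anti₀ (by linarith) (by linarith))
  have := integral_mono_ae (integrable_const ((b - m)⁻¹)) hi hae
  rw [integral_const, probReal_univ] at this
  simp at this
  rw [hint] at this
  have h1 : (b - m)⁻¹ * (b - m) = 1 := inv_mul_cancel₀ hbm.ne'
  nlinarith

lemma stmt18_alg (m σ c z D E : ℝ) (hD : D = 1 - c - c * z * m)
    (hE : E = 1 - c - c * z * (m + σ ^ 2)) (hD0 : D ≠ 0) (hE0 : E ≠ 0) :
    (E / D) ^ 2 * (m * D) + σ ^ 2 * (1 - c) * (E / D) = (m + σ ^ 2) * E := by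
  subst hD hE
  field_simp
  ring

/-- if `μ_Γ = μ_Θ ⊠ μ_c` (encoded by the inverse-Stieltjes
identity characterizing multiplicative free convolution with the
Marčenko–Pastur law `μ_c`) and `μ_W` satisfies the identity (4.2), then
`μ_W = (μ_Θ ⊞ δ_{σ²}) ⊠ μ_c`, i.e. the inverse Stieltjes transform of `μ_W`
satisfies the `⊠ μ_c` identity with respect to `m_{μ_Θ}⁻¹ + σ²`, the inverse
Stieltjes transform of `μ_Θ ⊞ δ_{σ²}`. (Equivalently,
`μ_W ⊠ μ_c = (μ_Γ ⊠ μ_c) ⊞ δ_{σ²}`.) -/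
theorem stmt18 (μΘ μΓ μW : Measure ℝ)
    [IsProbabilityMeasure μΘ] [IsProbabilityMeasure μΓ] [IsProbabilityMeasure μW]
    (bΘ bΓ bW : ℝ) (hΘsupp : μΘ (Set.Icc 0 bΘ)ᶜ = 0)
    (hΓsupp : μΓ (Set.Icc 0 bΓ)ᶜ = 0) (hWsupp : μW (Set.Icc 0 bW)ᶜ = 0)
    (σ c : ℝ) (hσ : 0 < σ) (hc : 0 < c)
    (mΘinv mΓinv mWinv : ℝ → ℝ) (z₀ : ℝ) (hz₀ : 0 < z₀)
    (hmΘ : ∀ z ∈ Set.Ioo 0 z₀, mΘinv z < 0 ∧ (∫ t, (t - mΘinv z)⁻¹ ∂μΘ) = z)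
    (hmΓ : ∀ z ∈ Set.Ioo 0 z₀, mΓinv z < 0 ∧ (∫ t, (t - mΓinv z)⁻¹ ∂μΓ) = z)
    (hmW : ∀ z ∈ Set.Ioo 0 z₀, mWinv z < 0 ∧ (∫ t, (t - mWinv z)⁻¹ ∂μW) = z)
    (hconv : ∀ z ∈ Set.Ioo 0 z₀,
      mΓinv (z / (1 - c - c * z * mΘinv z)) = mΘinv z * (1 - c - c * z * mΘinv z))
    (hW : ∀ z ∈ Set.Ioo 0 z₀,
      mWinv (z / (1 - σ ^ 2 * c * z))
        = (1 - σ ^ 2 * c * z) ^ 2 * mΓinv z + σ ^ 2 * (1 - c) * (1 - σ ^ 2 * c * z)) :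
    ∃ z₁ > 0, ∀ z ∈ Set.Ioo 0 z₁,
      mWinv (z / (1 - c - c * z * (mΘinv z + σ ^ 2)))
        = (mΘinv z + σ ^ 2) * (1 - c - c * z * (mΘinv z + σ ^ 2)) := by
  -- bound constant
  set B : ℝ := max bΘ 0 with hB_def
  have hB : 0 ≤ B := le_max_right _ _
  have hΘsupp' : μΘ (Set.Icc 0 B)ᶜ = 0 := by
    refine measure_mono_null ?_ hΘsupp
    apply Set.compl_subset_compl.mpr
    exact Set.Icc_subset_Icc_right (le_max_left _ _)
  set M : ℝ := c * B + σ ^ 2 * c + 1 with hM_def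
  have hM : 0 < M := by positivity
  clear_value M
  refine ⟨min (z₀ / 2) (1 / (2 * M)), by positivity, fun z hz => ?_⟩
  obtain ⟨hz1, hz2⟩ := hz
  have hzz0 : z < z₀ / 2 := lt_of_lt_of_le hz2 (min_le_left _ _)
  have hzM : z < 1 / (2 * M) := lt_of_lt_of_le hz2 (min_le_right _ _)
  have hzMz : M * z < 1 / 2 := by
    rw [lt_div_iff₀ (by positivity)] at hzM
    nlinarith
  have hzIoo : z ∈ Set.Ioo 0 z₀ := ⟨hz1, by linarith⟩
  obtain ⟨hmneg, hmint⟩ := hmΘ z hzIoo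
  set m : ℝ := mΘinv z with hm_def
  have haux : 1 ≤ z * (B - m) := stmt18_aux μΘ B hΘsupp' m z hmneg hz1 hmint hB
  -- D and E
  set D : ℝ := 1 - c - c * z * m with hD_def
  set E : ℝ := 1 - c - c * z * (m + σ ^ 2) with hE_def
  clear_value m D E
  have hcz : 0 < c * z := by positivity
  have hDge : 1 - c * z * B ≤ D := by nlinarith
  have hEeq : E = D - σ ^ 2 * c * z := by rw [hD_def, hE_def]; ring
  have hczB : c * z * B ≤ M * z := by nlinarith
  have hσcz : σ ^ 2 * c * z ≤ M * z := by nlinarith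
  have hEpos : (0:ℝ) < E := by
    rw [hEeq]; nlinarith
  have hDpos : (0:ℝ) < D := by nlinarith
  have hDhalf : (1:ℝ)/2 < D := by nlinarith
  -- w
  have hwIoo : z / D ∈ Set.Ioo 0 z₀ := by
    refine ⟨div_pos hz1 hDpos, ?_⟩
    rw [div_lt_iff₀ hDpos]
    nlinarith [mul_lt_mul_of_pos_left hDhalf hz₀]
  have hW' := hW (z / D) hwIoo
  have hconv' := hconv z hzIoo
  rw [← hm_def, ← hD_def] at hconv'
  have h0 : 1 - σ ^ 2 * c * (z / D) = E / D := by
    rw [hEeq, sub_div, div_self hDpos.ne', mul_div_assoc]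
  have h1 : z / D / (1 - σ ^ 2 * c * (z / D)) = z / E := by
    rw [h0]
    field_simp
  rw [h1, h0, hconv'] at hW'
  rw [hW']
  exact stmt18_alg m σ c z D E hD_def hE_def hDpos.ne' hEpos.ne'
end
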